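/- Let g : ℝ → ℝ be bounded and measurable, x ∈ ℝ, r > 0, and set I_r(x) = (2r)^{−2} ∫_{|t|<r}∫_{|s|<r} (g(x+t) − g(x+s))/(t−s) dt ds. Then I_r(x) = ∫₀¹ w·log((1+w)/(1−w)) · (g(x+rw) − g(x−rw))/(2rw) dw. -/

import Mathlib

open MeasureTheory Set Real Filter Topology Function

lemma integrableOn_log_Ioc (c : ℝ) : IntegrableOn Real.log (Ioc 0 c) := by
  rcases le_or_gt c 0 with hc | hc
  · rw [Ioc_eq_empty (by exact fun h => absurd (h.trans_le hc) (lt_irrefl 0))]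
    exact integrableOn_empty
  have hrpow : IntegrableOn (fun y : ℝ => y ^ (-(1/2) : ℝ)) (Ioc 0 c) := by
    have := intervalIntegral.intervalIntegrable_rpow' (a := 0) (b := c) (r := -(1/2)) (by norm_num)
    rwa [intervalIntegrable_iff_integrableOn_Ioc_of_le hc.le] at this
  have hB : IntegrableOn (fun y : ℝ => 2 * y ^ (-(1/2) : ℝ) + |Real.log c|) (Ioc 0 c) :=
    (hrpow.const_mul 2).add (integrableOn_const measure_Ioc_lt_top.ne)
  refine Integrable.mono hB (Real.measurable_log.aestronglyMeasurable) ?_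
  rw [ae_restrict_iff' measurableSet_Ioc]
  refine Eventually.of_forall fun y hy => ?_
  have hy0 : 0 < y := hy.1
  have hBnn : 0 ≤ 2 * y ^ (-(1/2) : ℝ) + |Real.log c| :=
    add_nonneg (by positivity) (abs_nonneg _)
  rw [Real.norm_eq_abs, Real.norm_eq_abs, abs_of_nonneg hBnn]
  rcases le_or_gt y 1 with h1 | h1
  · have : |Real.log y| = -Real.log y := abs_of_nonpos (Real.log_nonpos hy0.le h1)
    rw [this]
    have h2 : -Real.log y = 2 * Real.log (y ^ (-(1/2) : ℝ)) := by
      rw [Real.log_rpow hy0]; ring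
    have h3 : Real.log (y ^ (-(1/2) : ℝ)) ≤ y ^ (-(1/2) : ℝ) - 1 :=
      Real.log_le_sub_one_of_pos (Real.rpow_pos_of_pos hy0 _)
    nlinarith [abs_nonneg (Real.log c), Real.rpow_pos_of_pos hy0 (-(1/2) : ℝ)]
  · have : |Real.log y| = Real.log y := abs_of_nonneg (Real.log_nonneg h1.le)
    rw [this]
    have : Real.log y ≤ Real.log c := Real.log_le_log hy0 hy.2
    have := le_abs_self (Real.log c)
    nlinarith [Real.rpow_pos_of_pos hy0 (-(1/2) : ℝ)]


lemma integral_log_Ioc (c : ℝ) (hc : 0 ≤ c) :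
    ∫ y in Ioc 0 c, Real.log y = c * Real.log c - c := by
  rcases eq_or_lt_of_le hc with rfl | hc
  · simp
  set a : ℕ → ℝ := fun n => c / (n + 1) with ha
  have ha_pos : ∀ n, 0 < a n := fun n => by positivity
  have ha_le : ∀ n, a n ≤ c := fun n => by
    rw [ha]; rw [div_le_iff₀ (by positivity)]; nlinarith [Nat.cast_nonneg (α := ℝ) n]
  have ha_tendsto : Tendsto a atTop (𝓝[>] (0:ℝ)) := by
    apply tendsto_nhdsWithin_of_tendsto_nhds_of_eventually_within
    · have h1 : Tendsto (fun n : ℕ => ((n:ℝ) + 1)) atTop atTop :=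
        tendsto_natCast_atTop_atTop.atTop_add tendsto_const_nhds
      have := h1.inv_tendsto_atTop.const_mul c
      simp only [mul_zero] at this
      exact this.congr (fun n => by simp [ha, div_eq_mul_inv])
    · exact Eventually.of_forall fun n => ha_pos n
  have ha_t0 : Tendsto a atTop (𝓝 (0:ℝ)) := ha_tendsto.mono_right nhdsWithin_le_nhds
  -- limit of a n * log (a n)
  have hlog : Tendsto (fun n => a n * Real.log (a n)) atTop (𝓝 0) := by
    have h := tendsto_log_mul_rpow_nhdsGT_zero (r := 1) one_pos
    have h2 := h.comp ha_tendsto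
    simp only [Function.comp, Real.rpow_one] at h2
    exact h2.congr (fun n => by simp [Function.comp]; ring)
  -- dominated convergence
  have key : Tendsto (fun n => ∫ y in Ioc 0 c, (Ioc (a n) c).indicator Real.log y) atTop
      (𝓝 (∫ y in Ioc 0 c, Real.log y)) := by
    refine tendsto_integral_of_dominated_convergence (fun y => |Real.log y|)
      (fun n => (Real.measurable_log.indicator measurableSet_Ioc).aestronglyMeasurable) 
      ((integrableOn_log_Ioc c).abs) (fun n => ?_) ?_
    · refine Eventually.of_forall fun y => ?_
      rw [Real.norm_eq_abs]
      by_cases hy : y ∈ Ioc (a n) c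
      · rw [indicator_of_mem hy]
      · rw [indicator_of_notMem hy]; simp [abs_nonneg]
    · rw [ae_restrict_iff' measurableSet_Ioc]
      refine Eventually.of_forall fun y hy => ?_
      have : ∀ᶠ n in atTop, a n < y := by
        have := ha_t0.eventually_lt_const hy.1
        exact this
      refine Tendsto.congr' ?_ tendsto_const_nhds
      filter_upwards [this] with n hn
      rw [indicator_of_mem (show y ∈ Ioc (a n) c from ⟨hn, hy.2⟩)]
  -- identify the approximating integrals
  have heq : ∀ n, ∫ y in Ioc 0 c, (Ioc (a n) c).indicator Real.log y
      = c * Real.log c - c - (a n * Real.log (a n) - a n) := by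
    intro n
    rw [integral_indicator measurableSet_Ioc,
      Measure.restrict_restrict measurableSet_Ioc]
    have hsub : Ioc (a n) c ∩ Ioc 0 c = Ioc (a n) c := by
      rw [inter_eq_left]
      exact Ioc_subset_Ioc (ha_pos n).le le_rfl
    rw [hsub, ← intervalIntegral.integral_of_le (ha_le n), integral_log]
    ring
  have key2 : Tendsto (fun n => ∫ y in Ioc 0 c, (Ioc (a n) c).indicator Real.log y) atTop
      (𝓝 (c * Real.log c - c)) := by
    simp_rw [heq]
    have : Tendsto (fun n => c * Real.log c - c - (a n * Real.log (a n) - a n)) atTop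
        (𝓝 (c * Real.log c - c - (0 - 0))) :=
      tendsto_const_nhds.sub (hlog.sub ha_t0)
    simpa using this
  exact tendsto_nhds_unique key key2


lemma ii_log0 (c : ℝ) (hc : 0 ≤ c) : IntervalIntegrable Real.log volume 0 c := by
  rw [intervalIntegrable_iff_integrableOn_Ioc_of_le hc]; exact integrableOn_log_Ioc c

lemma il0 (c : ℝ) (hc : 0 ≤ c) : ∫ y in (0:ℝ)..c, Real.log y = c * Real.log c - c := by
  rw [intervalIntegral.integral_of_le hc]; exact integral_log_Ioc c hc

lemma ii_log_sub (a b : ℝ) (hab : a ≤ b) :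
    IntervalIntegrable (fun t => Real.log (t - a)) volume a b := by
  have := (ii_log0 (b - a) (by linarith)).comp_sub_right a
  simpa using this

lemma il_sub (a b : ℝ) (hab : a ≤ b) :
    ∫ t in a..b, Real.log (t - a) = (b - a) * Real.log (b - a) - (b - a) := by
  have := intervalIntegral.integral_comp_sub_right (a := a) (b := b) Real.log a
  rw [this, sub_self]
  exact il0 (b - a) (by linarith)

lemma ii_log_sub' (a b : ℝ) (hab : a ≤ b) :
    IntervalIntegrable (fun t => Real.log (b - t)) volume a b := by
  have := (ii_log0 (b - a) (by linarith)).comp_sub_left b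
  simpa using this.symm

lemma il_sub' (a b : ℝ) (hab : a ≤ b) :
    ∫ t in a..b, Real.log (b - t) = (b - a) * Real.log (b - a) - (b - a) := by
  have := intervalIntegral.integral_comp_sub_left (a := a) (b := b) Real.log b
  rw [this, sub_self]
  exact il0 (b - a) (by linarith)


noncomputable def psi (r u : ℝ) : ℝ :=
  if |u| < r then
    (2*Real.log 2 - (1+|u|/r)*Real.log (1+|u|/r) - (1-|u|/r)*Real.log (1-|u|/r))/(2*r)
  else 0

lemma kernelG (r : ℝ) (hr : 0 < r) (u : ℝ) :
    (∫⁻ t in Ioo (-r) r, ∫⁻ s in Ioo (-r) r,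
      (Ioc (min s t) (max s t)).indicator (fun _ => (ENNReal.ofReal |t - s|)⁻¹) u)
    = ENNReal.ofReal (4*r^2 * psi r u) := by
  rcases le_or_gt r |u| with hu | hu
  · -- outside: everything vanishes
    rw [psi, if_neg (not_lt.2 hu), mul_zero, ENNReal.ofReal_zero]
    have h0 : ∀ t ∈ Ioo (-r) r, (∫⁻ s in Ioo (-r) r,
        (Ioc (min s t) (max s t)).indicator (fun _ => (ENNReal.ofReal |t - s|)⁻¹) u) = 0 := by
      intro t ht
      have h1 : ∀ s ∈ Ioo (-r) r,
          (Ioc (min s t) (max s t)).indicator (fun _ => (ENNReal.ofReal |t - s|)⁻¹) u = 0 := by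
        intro s hs
        apply indicator_of_notMem
        rintro ⟨h1, h2⟩
        have : |u| < r := abs_lt.2 ⟨(lt_min hs.1 ht.1).trans h1, h2.trans_lt (max_lt hs.2 ht.2)⟩
        exact absurd hu this.not_ge
      rw [setLIntegral_congr_fun measurableSet_Ioo h1, lintegral_zero]
    rw [setLIntegral_congr_fun measurableSet_Ioo h0, lintegral_zero]
  · -- inside
    obtain ⟨hu1, hu2⟩ := abs_lt.1 hu
    set K : ℝ := 2*r*Real.log (2*r) - (r+u)*Real.log (r+u) - (r-u)*Real.log (r-u) with hK
    -- inner integral for t > u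
    have innerA : ∀ t ∈ Ioo u r, (∫⁻ s in Ioo (-r) r,
        (Ioc (min s t) (max s t)).indicator (fun _ => (ENNReal.ofReal |t - s|)⁻¹) u)
        = ENNReal.ofReal (Real.log (t+r) - Real.log (t-u)) := by
      intro t ht
      have e1 : ∀ s : ℝ, (Ioc (min s t) (max s t)).indicator
          (fun _ => (ENNReal.ofReal |t - s|)⁻¹) u
          = (Iio u).indicator (fun s => ENNReal.ofReal ((t - s)⁻¹)) s := by
        intro s
        by_cases hs : s < u
        · have hst : s ≤ t := by linarith [ht.1]
          rw [min_eq_left hst, max_eq_right hst,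
            indicator_of_mem (show u ∈ Ioc s t from ⟨hs, ht.1.le⟩),
            indicator_of_mem (show s ∈ Iio u from hs),
            abs_of_pos (by linarith [ht.1] : (0:ℝ) < t - s),
            ← ENNReal.ofReal_inv_of_pos (by linarith [ht.1] : (0:ℝ) < t - s)]
        · push_neg at hs
          rw [indicator_of_notMem (fun hmem => absurd hmem.1 (not_lt.2 (le_min hs ht.1.le)))]
          exact (indicator_of_notMem (fun h : s ∈ Iio u => absurd h (not_lt.2 hs)) _).symm
      simp_rw [e1]
      rw [lintegral_indicator measurableSet_Iio, Measure.restrict_restrict measurableSet_Iio]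
      have hset : Iio u ∩ Ioo (-r) r = Ioo (-r) u := by
        ext y
        simp only [mem_inter_iff, mem_Iio, mem_Ioo]
        constructor
        · rintro ⟨h1, h2, h3⟩; exact ⟨h2, h1⟩
        · rintro ⟨h1, h2⟩; exact ⟨h2, h1, by linarith⟩
      rw [hset]
      have hint : IntegrableOn (fun s => (t - s)⁻¹) (Ioo (-r) u) := by
        apply (ContinuousOn.integrableOn_compact isCompact_Icc ?_).mono_set Ioo_subset_Icc_self
        exact (continuousOn_const.sub continuousOn_id).inv₀
          (fun s hs => by simp only [Pi.sub_apply, id]; intro h; rw [sub_eq_zero] at h; subst h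
                          exact absurd hs.2 (not_le.2 ht.1))
      rw [← ofReal_integral_eq_lintegral_ofReal hint ((ae_restrict_iff' measurableSet_Ioo).2
        (Eventually.of_forall (fun s hs => inv_nonneg.2 (by linarith [hs.2, ht.1]))))]
      congr 1
      rw [← integral_Ioc_eq_integral_Ioo, ← intervalIntegral.integral_of_le (by linarith : -r ≤ u),
        intervalIntegral.integral_comp_sub_left (fun y => y⁻¹) t]
      have h1 : (0:ℝ) < t - u := by linarith [ht.1]
      have h2 : (0:ℝ) < t - -r := by linarith [ht.2, hu1]
      rw [integral_inv (notMem_uIcc_of_lt h1 h2), sub_neg_eq_add,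
        Real.log_div (by linarith) (by linarith)]
    -- inner integral for t < u
    have innerB : ∀ t ∈ Ioo (-r) u, (∫⁻ s in Ioo (-r) r,
        (Ioc (min s t) (max s t)).indicator (fun _ => (ENNReal.ofReal |t - s|)⁻¹) u)
        = ENNReal.ofReal (Real.log (r-t) - Real.log (u-t)) := by
      intro t ht
      have e1 : ∀ s : ℝ, (Ioc (min s t) (max s t)).indicator
          (fun _ => (ENNReal.ofReal |t - s|)⁻¹) u
          = (Ici u).indicator (fun s => ENNReal.ofReal ((s - t)⁻¹)) s := by
        intro s
        by_cases hs : u ≤ s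
        · have hst : t ≤ s := by linarith [ht.2]
          rw [min_eq_right hst, max_eq_left hst,
            indicator_of_mem (show u ∈ Ioc t s from ⟨ht.2, hs⟩),
            indicator_of_mem (show s ∈ Ici u from hs),
            abs_of_nonpos (by linarith : t - s ≤ 0), neg_sub,
            ← ENNReal.ofReal_inv_of_pos (by linarith [ht.2] : (0:ℝ) < s - t)]
        · push_neg at hs
          rw [indicator_of_notMem (fun hmem => absurd hmem.2 (not_le.2 (max_lt hs ht.2)))]
          exact (indicator_of_notMem (fun h : s ∈ Ici u => absurd h (not_le.2 hs)) _).symm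
      simp_rw [e1]
      rw [lintegral_indicator measurableSet_Ici, Measure.restrict_restrict measurableSet_Ici]
      have hset : Ici u ∩ Ioo (-r) r = Ico u r := by
        ext y
        simp only [mem_inter_iff, mem_Ici, mem_Ioo, mem_Ico]
        constructor
        · rintro ⟨h1, h2, h3⟩; exact ⟨h1, h3⟩
        · rintro ⟨h1, h2⟩; exact ⟨h1, by linarith, h2⟩
      rw [hset, ← Measure.restrict_congr_set Ioo_ae_eq_Ico]
      have hint : IntegrableOn (fun s => (s - t)⁻¹) (Ioo u r) := by
        apply (ContinuousOn.integrableOn_compact isCompact_Icc ?_).mono_set Ioo_subset_Icc_self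
        exact (continuousOn_id.sub continuousOn_const).inv₀
          (fun s hs => by simp only [Pi.sub_apply, id]; intro h; rw [sub_eq_zero] at h; subst h
                          exact absurd hs.1 (not_le.2 ht.2))
      rw [← ofReal_integral_eq_lintegral_ofReal hint ((ae_restrict_iff' measurableSet_Ioo).2
        (Eventually.of_forall (fun s hs => inv_nonneg.2 (by linarith [hs.1, ht.2]))))]
      congr 1
      rw [← integral_Ioc_eq_integral_Ioo, ← intervalIntegral.integral_of_le (by linarith : u ≤ r),
        intervalIntegral.integral_comp_sub_right (fun y => y⁻¹) t]
      have h1 : (0:ℝ) < u - t := by linarith [ht.2]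
      have h2 : (0:ℝ) < r - t := by linarith [ht.1]
      rw [integral_inv (notMem_uIcc_of_lt h1 h2),
        Real.log_div (by linarith) (by linarith)]
    -- split the outer integral
    have hsplit : Ioo (-r) r = Ioo (-r) u ∪ Ico u r := by
      ext y
      simp only [mem_Ioo, mem_union, mem_Ico]
      constructor
      · rintro ⟨h1, h2⟩
        rcases lt_or_ge y u with h | h
        · exact Or.inl ⟨h1, h⟩
        · exact Or.inr ⟨h, h2⟩
      · rintro (⟨h1, h2⟩ | ⟨h1, h2⟩)
        · exact ⟨h1, by linarith⟩
        · exact ⟨by linarith, h2⟩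
    have hdisj : Disjoint (Ioo (-r) u) (Ico u r) :=
      disjoint_left.2 fun a ha ha' => absurd ha.2 (not_lt.2 ha'.1)
    -- piece 1
    have hp1 : (∫⁻ t in Ioo (-r) u, ∫⁻ s in Ioo (-r) r,
        (Ioc (min s t) (max s t)).indicator (fun _ => (ENNReal.ofReal |t - s|)⁻¹) u)
        = ENNReal.ofReal K ∧ 0 ≤ K := by
      rw [setLIntegral_congr_fun measurableSet_Ioo innerB]
      have hint1 : IntegrableOn (fun t => Real.log (r - t)) (Ioo (-r) u) := by
        apply (ContinuousOn.integrableOn_compact isCompact_Icc ?_).mono_set Ioo_subset_Icc_self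
        apply ContinuousOn.log (continuousOn_const.sub continuousOn_id)
        intro t htt
        exact ne_of_gt (show (0:ℝ) < r - t by linarith [htt.2])
      have hint2 : IntegrableOn (fun t => Real.log (u - t)) (Ioo (-r) u) := by
        have := ii_log_sub' (-r) u (by linarith)
        rw [intervalIntegrable_iff_integrableOn_Ioc_of_le (by linarith)] at this
        exact this.mono_set Ioo_subset_Ioc_self
      have hint : IntegrableOn (fun t => Real.log (r - t) - Real.log (u - t)) (Ioo (-r) u) :=
        hint1.sub hint2
      have hnn : 0 ≤ᵐ[volume.restrict (Ioo (-r) u)]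
          fun t => Real.log (r - t) - Real.log (u - t) :=
        (ae_restrict_iff' measurableSet_Ioo).2 (Eventually.of_forall fun t htt => sub_nonneg.2
          (Real.log_le_log (by linarith [htt.2]) (by linarith)))
      have hii1 : IntervalIntegrable (fun t => Real.log (r - t)) volume (-r) u := by
        apply ContinuousOn.intervalIntegrable
        rw [uIcc_of_le (by linarith : -r ≤ u)]
        apply ContinuousOn.log (continuousOn_const.sub continuousOn_id)
        intro t htt
        exact ne_of_gt (show (0:ℝ) < r - t by linarith [htt.2])
      have hval : (∫ t in Ioo (-r) u, (Real.log (r - t) - Real.log (u - t))) = K := by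
        rw [← integral_Ioc_eq_integral_Ioo,
          ← intervalIntegral.integral_of_le (by linarith : -r ≤ u),
          intervalIntegral.integral_sub hii1 (ii_log_sub' (-r) u (by linarith))]
        have c1 : ∫ t in (-r)..u, Real.log (r - t)
            = 2*r*Real.log (2*r) - (r-u)*Real.log (r-u) - 2*r + (r-u) := by
          rw [intervalIntegral.integral_comp_sub_left Real.log r, sub_neg_eq_add,
            integral_log]
          have : r + r = 2*r := by ring
          rw [this]
        rw [c1, il_sub' (-r) u (by linarith)]
        have h1 : u - -r = u + r := by ring
        have h2 : Real.log (u + r) = Real.log (r + u) := by rw [add_comm]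
        rw [h1, h2, hK]
        ring
      constructor
      · rw [← ofReal_integral_eq_lintegral_ofReal hint hnn, hval]
      · rw [← hval]
        exact setIntegral_nonneg measurableSet_Ioo fun t htt => sub_nonneg.2
          (Real.log_le_log (by linarith [htt.2]) (by linarith))
    -- piece 2
    have hp2 : (∫⁻ t in Ico u r, ∫⁻ s in Ioo (-r) r,
        (Ioc (min s t) (max s t)).indicator (fun _ => (ENNReal.ofReal |t - s|)⁻¹) u)
        = ENNReal.ofReal K := by
      rw [← Measure.restrict_congr_set Ioo_ae_eq_Ico,
        setLIntegral_congr_fun measurableSet_Ioo innerA]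
      have hint1 : IntegrableOn (fun t => Real.log (t + r)) (Ioo u r) := by
        apply (ContinuousOn.integrableOn_compact isCompact_Icc ?_).mono_set Ioo_subset_Icc_self
        apply ContinuousOn.log (continuousOn_id.add continuousOn_const)
        intro t htt
        exact ne_of_gt (show (0:ℝ) < t + r by linarith [htt.1])
      have hint2 : IntegrableOn (fun t => Real.log (t - u)) (Ioo u r) := by
        have := ii_log_sub u r (by linarith)
        rw [intervalIntegrable_iff_integrableOn_Ioc_of_le (by linarith)] at this
        exact this.mono_set Ioo_subset_Ioc_self
      have hint : IntegrableOn (fun t => Real.log (t + r) - Real.log (t - u)) (Ioo u r) :=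
        hint1.sub hint2
      have hnn : 0 ≤ᵐ[volume.restrict (Ioo u r)]
          fun t => Real.log (t + r) - Real.log (t - u) :=
        (ae_restrict_iff' measurableSet_Ioo).2 (Eventually.of_forall fun t htt => sub_nonneg.2
          (Real.log_le_log (by linarith [htt.1]) (by linarith)))
      have hii2 : IntervalIntegrable (fun t => Real.log (t + r)) volume u r := by
        apply ContinuousOn.intervalIntegrable
        rw [uIcc_of_le (by linarith : u ≤ r)]
        apply ContinuousOn.log (continuousOn_id.add continuousOn_const)
        intro t htt
        exact ne_of_gt (show (0:ℝ) < t + r by linarith [htt.1])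
      have hval : (∫ t in Ioo u r, (Real.log (t + r) - Real.log (t - u))) = K := by
        rw [← integral_Ioc_eq_integral_Ioo,
          ← intervalIntegral.integral_of_le (by linarith : u ≤ r),
          intervalIntegral.integral_sub hii2 (ii_log_sub u r (by linarith))]
        have c1 : ∫ t in u..r, Real.log (t + r)
            = 2*r*Real.log (2*r) - (u+r)*Real.log (u+r) - 2*r + (u+r) := by
          rw [intervalIntegral.integral_comp_add_right Real.log r,
            integral_log]
          have : r + r = 2*r := by ring
          rw [this]
        rw [c1, il_sub u r (by linarith), hK]
        have h1 : Real.log (u + r) = Real.log (r + u) := by rw [add_comm]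
        rw [h1]
        ring
      rw [← ofReal_integral_eq_lintegral_ofReal hint hnn, hval]
    obtain ⟨hp1v, hKnn⟩ := hp1
    have hsum : (∫⁻ t in Ioo (-r) r, ∫⁻ s in Ioo (-r) r,
        (Ioc (min s t) (max s t)).indicator (fun _ => (ENNReal.ofReal |t - s|)⁻¹) u)
        = (∫⁻ t in Ioo (-r) u, ∫⁻ s in Ioo (-r) r,
            (Ioc (min s t) (max s t)).indicator (fun _ => (ENNReal.ofReal |t - s|)⁻¹) u)
          + ∫⁻ t in Ico u r, ∫⁻ s in Ioo (-r) r,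
            (Ioc (min s t) (max s t)).indicator (fun _ => (ENNReal.ofReal |t - s|)⁻¹) u := by
      rw [← lintegral_union measurableSet_Ico hdisj]
      congr 1
      rw [← hsplit]
    rw [hsum, hp1v, hp2, ← ENNReal.ofReal_add hKnn hKnn]
    congr 1
    rw [psi, if_pos hu, hK]
    have hrne : r ≠ 0 := ne_of_gt hr
    have h2r : Real.log (2*r) = Real.log 2 + Real.log r :=
      Real.log_mul (by norm_num) hrne
    rcases abs_cases u with ⟨habs, hsgn⟩ | ⟨habs, hsgn⟩
    · rw [habs]
      have hc1 : (0:ℝ) < 1 + u/r := by positivity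
      have hc2 : (0:ℝ) < 1 - u/r := by
        rw [sub_pos, div_lt_one hr]; linarith
      have e1 : Real.log (r + u) = Real.log r + Real.log (1 + u/r) := by
        rw [show r + u = r * (1 + u/r) by field_simp, Real.log_mul hrne (ne_of_gt hc1)]
      have e2 : Real.log (r - u) = Real.log r + Real.log (1 - u/r) := by
        rw [show r - u = r * (1 - u/r) by field_simp, Real.log_mul hrne (ne_of_gt hc2)]
      rw [e1, e2, h2r]
      field_simp
      ring
    · rw [habs]
      have hc1 : (0:ℝ) < 1 + -u/r := by
        have : (0:ℝ) ≤ -u/r := div_nonneg (by linarith) hr.le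
        linarith
      have hc2 : (0:ℝ) < 1 - -u/r := by
        rw [sub_pos, div_lt_one hr]; linarith
      have e1 : Real.log (r - u) = Real.log r + Real.log (1 + -u/r) := by
        rw [show r - u = r * (1 + -u/r) by first | (field_simp; ring) | field_simp, Real.log_mul hrne (ne_of_gt hc1)]
      have e2 : Real.log (r + u) = Real.log r + Real.log (1 - -u/r) := by
        rw [show r + u = r * (1 - -u/r) by first | (field_simp; ring) | field_simp, Real.log_mul hrne (ne_of_gt hc2)]
      rw [e1, e2, h2r]
      field_simp
      ring


lemma kernelH (r : ℝ) (hr : 0 < r) (u : ℝ) :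
    (∫⁻ w in Ioo (0:ℝ) 1, (Ioc (-(r*w)) (r*w)).indicator
      (fun _ => ENNReal.ofReal ((w * Real.log ((1+w)/(1-w))) / (2*r*w))) u)
    = ENNReal.ofReal (psi r u) := by
  have e1 : ∀ w : ℝ, (Ioc (-(r*w)) (r*w)).indicator
      (fun _ => ENNReal.ofReal ((w * Real.log ((1+w)/(1-w))) / (2*r*w))) u
      = ({w : ℝ | -(r*w) < u ∧ u ≤ r*w}).indicator
        (fun w => ENNReal.ofReal ((w * Real.log ((1+w)/(1-w))) / (2*r*w))) w := by
    intro w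
    by_cases hw : -(r*w) < u ∧ u ≤ r*w
    · rw [indicator_of_mem (show u ∈ Ioc (-(r*w)) (r*w) from hw),
        indicator_of_mem (show w ∈ {w : ℝ | -(r*w) < u ∧ u ≤ r*w} from hw)]
    · rw [indicator_of_notMem (show u ∉ Ioc (-(r*w)) (r*w) from hw),
        indicator_of_notMem (show w ∉ {w : ℝ | -(r*w) < u ∧ u ≤ r*w} from hw)]
  simp_rw [e1]
  have hAmeas : MeasurableSet {w : ℝ | -(r*w) < u ∧ u ≤ r*w} := by
    apply MeasurableSet.inter
    · exact measurableSet_lt ((measurable_const_mul r).neg) measurable_const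
    · exact measurableSet_le measurable_const (measurable_const_mul r)
  rw [lintegral_indicator hAmeas, Measure.restrict_restrict hAmeas]
  rcases le_or_gt r |u| with hu | hu
  · rw [psi, if_neg (not_lt.2 hu), ENNReal.ofReal_zero]
    have hempty : {w : ℝ | -(r*w) < u ∧ u ≤ r*w} ∩ Ioo (0:ℝ) 1 = ∅ := by
      ext w
      simp only [mem_inter_iff, mem_setOf_eq, mem_Ioo, mem_empty_iff_false, iff_false]
      rintro ⟨⟨h1, h2⟩, h3, h4⟩
      have h5 : |u| ≤ r*w := abs_le.2 ⟨by linarith, h2⟩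
      have : r*w < r := by nlinarith
      linarith
    rw [hempty, Measure.restrict_empty, lintegral_zero_measure]
  · rw [psi, if_pos hu]
    set c : ℝ := |u|/r with hc
    have hc0 : 0 ≤ c := div_nonneg (abs_nonneg u) hr.le
    have hc1 : c < 1 := (div_lt_one hr).2 hu
    have hsub1 : Ioo c 1 ⊆ {w : ℝ | -(r*w) < u ∧ u ≤ r*w} ∩ Ioo (0:ℝ) 1 := by
      rintro w ⟨hw1, hw2⟩
      have hrw : |u| < r*w := by
        rw [hc, div_lt_iff₀ hr] at hw1
        linarith [hw1]
      have := abs_lt.1 hrw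
      exact ⟨⟨by linarith [this.1], (this.2).le⟩, lt_of_le_of_lt hc0 hw1, hw2⟩
    have hsub2 : {w : ℝ | -(r*w) < u ∧ u ≤ r*w} ∩ Ioo (0:ℝ) 1 ⊆ Ico c 1 := by
      rintro w ⟨⟨h1, h2⟩, h3, h4⟩
      have h5 : |u| ≤ r*w := abs_le.2 ⟨by linarith, h2⟩
      rw [hc]
      exact ⟨(div_le_iff₀ hr).2 (by linarith), h4⟩
    have hae : ({w : ℝ | -(r*w) < u ∧ u ≤ r*w} ∩ Ioo (0:ℝ) 1 : Set ℝ) =ᵐ[volume] (Ioo c 1 : Set ℝ) := by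
      rw [MeasureTheory.ae_eq_set]
      constructor
      · refine measure_mono_null (fun w hw => ?_) (measure_singleton c)
        obtain ⟨hw1, hw2⟩ := hw
        have h1 := hsub2 hw1
        have : w = c := le_antisymm (by
          by_contra h
          push_neg at h
          exact hw2 ⟨h, h1.2⟩) h1.1
        simpa using this
      · rw [diff_eq_empty.2 hsub1]
        exact measure_empty
    rw [Measure.restrict_congr_set hae]
    have e2 : ∀ w ∈ Ioo c 1, ENNReal.ofReal ((w * Real.log ((1+w)/(1-w))) / (2*r*w))
        = ENNReal.ofReal ((Real.log (w+1) - Real.log (1-w))/(2*r)) := by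
      intro w hw
      have hw0 : 0 < w := lt_of_le_of_lt hc0 hw.1
      have hw1 : w < 1 := hw.2
      congr 1
      rw [Real.log_div (by linarith) (by linarith)]
      have h1w : (1:ℝ) + w = w + 1 := by ring
      rw [h1w]
      field_simp
    rw [setLIntegral_congr_fun measurableSet_Ioo e2]
    have hii1 : IntervalIntegrable (fun w => Real.log (w + 1)) volume c 1 := by
      apply ContinuousOn.intervalIntegrable
      rw [uIcc_of_le (by linarith : c ≤ 1)]
      apply ContinuousOn.log (continuousOn_id.add continuousOn_const)
      intro w hw
      exact ne_of_gt (show (0:ℝ) < w + 1 by linarith [hw.1])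
    have hint1 : IntegrableOn (fun w => Real.log (w + 1)) (Ioo c 1) := by
      have := hii1
      rw [intervalIntegrable_iff_integrableOn_Ioc_of_le (by linarith : c ≤ 1)] at this
      exact this.mono_set Ioo_subset_Ioc_self
    have hint2 : IntegrableOn (fun w => Real.log (1 - w)) (Ioo c 1) := by
      have := ii_log_sub' c 1 (by linarith)
      rw [intervalIntegrable_iff_integrableOn_Ioc_of_le (by linarith : c ≤ 1)] at this
      exact this.mono_set Ioo_subset_Ioc_self
    have hint : IntegrableOn (fun w => (Real.log (w+1) - Real.log (1-w))/(2*r)) (Ioo c 1) :=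
      (hint1.sub hint2).div_const (2*r)
    have hnn : 0 ≤ᵐ[volume.restrict (Ioo c 1)]
        fun w => (Real.log (w+1) - Real.log (1-w))/(2*r) :=
      (ae_restrict_iff' measurableSet_Ioo).2 (Eventually.of_forall fun w hw =>
        div_nonneg (sub_nonneg.2 (Real.log_le_log (by linarith [hw.2]) (by linarith [hc0, hw.1])))
          (by linarith))
    rw [← ofReal_integral_eq_lintegral_ofReal hint hnn]
    congr 1
    rw [← integral_Ioc_eq_integral_Ioo, ← intervalIntegral.integral_of_le (by linarith : c ≤ 1),
      intervalIntegral.integral_div,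
      intervalIntegral.integral_sub hii1 (ii_log_sub' c 1 (by linarith))]
    have c1 : ∫ w in c..1, Real.log (w + 1)
        = 2*Real.log 2 - (c+1)*Real.log (c+1) - 2 + (c+1) := by
      rw [intervalIntegral.integral_comp_add_right Real.log 1,
        integral_log]
      have h2 : (1:ℝ) + 1 = 2 := by norm_num
      rw [h2]
    rw [c1, il_sub' c 1 (by linarith)]
    have h3 : Real.log (c + 1) = Real.log (1 + c) := by rw [add_comm]
    rw [h3]
    ring


lemma psi_le (r : ℝ) (hr : 0 < r) (u : ℝ) : psi r u ≤ (2*Real.log 2 + 1)/(2*r) := by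
  have hM : (0:ℝ) ≤ (2*Real.log 2 + 1)/(2*r) :=
    div_nonneg (by nlinarith [Real.log_nonneg (by norm_num : (1:ℝ) ≤ 2)]) (by linarith)
  rw [psi]
  split_ifs with h
  · rw [div_le_div_iff_of_pos_right (by linarith : (0:ℝ) < 2*r)]
    set c : ℝ := |u|/r with hc
    have hc0 : 0 ≤ c := div_nonneg (abs_nonneg u) hr.le
    have hc1 : c < 1 := (div_lt_one hr).2 h
    have h1 : 0 ≤ (1+c)*Real.log (1+c) :=
      mul_nonneg (by linarith) (Real.log_nonneg (by linarith))
    have hy : (0:ℝ) < 1 - c := by linarith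
    have h3 := Real.log_le_sub_one_of_pos (inv_pos.2 hy)
    rw [Real.log_inv] at h3
    have h4 : (1-c) * (-Real.log (1-c)) ≤ (1-c) * ((1-c)⁻¹ - 1) :=
      mul_le_mul_of_nonneg_left h3 hy.le
    have h5 : (1-c) * (1-c)⁻¹ = 1 := mul_inv_cancel₀ (ne_of_gt hy)
    nlinarith
  · exact hM


theorem stmt10 (g : ℝ → ℝ) (hg : Monotone g) (hgb : ∃ C, ∀ x, |g x| ≤ C)
    (x r : ℝ) (hr : 0 < r) :
    ((2 * r) ^ 2)⁻¹ *
        (∫ t in Set.Ioo (-r) r, ∫ s in Set.Ioo (-r) r, (g (x + t) - g (x + s)) / (t - s)) =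
      ∫ w in (0:ℝ)..1,
        (w * Real.log ((1 + w) / (1 - w))) * ((g (x + r * w) - g (x - r * w)) / (2 * r * w)) := by
  obtain ⟨C, hC⟩ := hgb
  set h : ℝ → ℝ := fun u => g (x + u) with hh
  have hmono : Monotone h := fun a b hab => hg (by linarith)
  set f := hmono.stieltjesFunction with hfdef
  have hfeq : ∀ u, ContinuousAt h u → f u = h u := by
    intro u hu
    exact rightLim_eq_of_tendsto
      ((hu.tendsto).mono_left nhdsWithin_le_nhds)
  have hbad : {u | f u ≠ h u}.Countable := by
    refine (hmono.countable_not_continuousAt).mono ?_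
    intro u hu
    simp only [mem_setOf_eq] at hu ⊢
    exact fun hc => hu (hfeq u hc)
  have hbadnull : volume {u | f u ≠ h u} = 0 := hbad.measure_zero _
  have hfmeas : Measurable (f : ℝ → ℝ) := f.mono.measurable
  -- finiteness of the Stieltjes measure
  have habs : ∀ v, |h v| ≤ C := fun v => hC (x + v)
  have hfbdd : ∀ v, f v ≤ C := by
    intro v
    calc f v ≤ h (v + 1) := hmono.rightLim_le (lt_add_one v)
    _ ≤ C := (abs_le.1 (habs (v+1))).2
  have hfbddb : ∀ v, -C ≤ f v := by
    intro v
    calc (-C : ℝ) ≤ h v := (abs_le.1 (habs v)).1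
    _ ≤ f v := hmono.le_rightLim le_rfl
  haveI : IsFiniteMeasure f.measure := by
    have htop : Tendsto (f : ℝ → ℝ) atTop (𝓝 (⨆ v, f v)) :=
      tendsto_atTop_ciSup f.mono ⟨C, by rintro y ⟨v, rfl⟩; exact hfbdd v⟩
    have hbot : Tendsto (f : ℝ → ℝ) atBot (𝓝 (⨅ v, f v)) :=
      tendsto_atBot_ciInf f.mono ⟨-C, by rintro y ⟨v, rfl⟩; exact hfbddb v⟩
    exact ⟨by rw [f.measure_univ hbot htop]; exact ENNReal.ofReal_lt_top⟩
  -- measurability of the triple kernel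
  have hk3meas : Measurable (fun p : ℝ × ℝ × ℝ =>
      (Ioc (min p.2.1 p.1) (max p.2.1 p.1)).indicator
        (fun _ => (ENNReal.ofReal |p.1 - p.2.1|)⁻¹) p.2.2) := by
    have heq : (fun p : ℝ × ℝ × ℝ =>
        (Ioc (min p.2.1 p.1) (max p.2.1 p.1)).indicator
          (fun _ => (ENNReal.ofReal |p.1 - p.2.1|)⁻¹) p.2.2)
        = (fun p : ℝ × ℝ × ℝ =>
          ({q : ℝ × ℝ × ℝ | min q.2.1 q.1 < q.2.2 ∧ q.2.2 ≤ max q.2.1 q.1}).indicator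
            (fun q => (ENNReal.ofReal |q.1 - q.2.1|)⁻¹) p) := by
      funext p
      by_cases hp : min p.2.1 p.1 < p.2.2 ∧ p.2.2 ≤ max p.2.1 p.1
      · rw [indicator_of_mem (show p.2.2 ∈ Ioc (min p.2.1 p.1) (max p.2.1 p.1) from hp),
          indicator_of_mem (show p ∈ {q : ℝ × ℝ × ℝ |
            min q.2.1 q.1 < q.2.2 ∧ q.2.2 ≤ max q.2.1 q.1} from hp)]
      · rw [indicator_of_notMem (show p.2.2 ∉ Ioc (min p.2.1 p.1) (max p.2.1 p.1) from hp),
          indicator_of_notMem (show p ∉ {q : ℝ × ℝ × ℝ |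
            min q.2.1 q.1 < q.2.2 ∧ q.2.2 ≤ max q.2.1 q.1} from hp)]
    rw [heq]
    apply Measurable.indicator
    · exact ((measurable_fst.sub (measurable_fst.comp measurable_snd)).abs.ennreal_ofReal).inv
    · apply MeasurableSet.inter
      · exact measurableSet_lt ((measurable_fst.comp measurable_snd).min measurable_fst)
          (measurable_snd.comp measurable_snd)
      · exact measurableSet_le (measurable_snd.comp measurable_snd)
          ((measurable_fst.comp measurable_snd).max measurable_fst)
  -- pointwise identity producing the Stieltjes integral
  have step_inner : ∀ t s : ℝ, ENNReal.ofReal ((f t - f s)/(t - s))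
      = ∫⁻ u, (Ioc (min s t) (max s t)).indicator
          (fun _ => (ENNReal.ofReal |t - s|)⁻¹) u ∂f.measure := by
    intro t s
    rw [lintegral_indicator measurableSet_Ioc, setLIntegral_const]
    rcases lt_trichotomy s t with hst | hst | hst
    · rw [min_eq_left hst.le, max_eq_right hst.le, f.measure_Ioc,
        abs_of_pos (by linarith : (0:ℝ) < t - s),
        ENNReal.ofReal_div_of_pos (by linarith : (0:ℝ) < t - s), div_eq_mul_inv, mul_comm]
    · subst hst
      simp [Ioc_self]
    · rw [min_eq_right hst.le, max_eq_left hst.le, f.measure_Ioc,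
        abs_of_neg (by linarith : t - s < 0),
        show (f t - f s)/(t - s) = (f s - f t)/(s - t) by
          rw [← neg_sub (f s) (f t), ← neg_sub s t, neg_div_neg_eq]]
      rw [show -(t - s) = s - t by ring,
        ENNReal.ofReal_div_of_pos (by linarith : (0:ℝ) < s - t), div_eq_mul_inv, mul_comm]
  -- the double lintegral equals the Stieltjes integral of the kernel G
  have NNeq : (∫⁻ t in Ioo (-r) r, ∫⁻ s in Ioo (-r) r, ENNReal.ofReal ((f t - f s)/(t - s)))
      = ∫⁻ u, ENNReal.ofReal (4*r^2 * psi r u) ∂f.measure := by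
    have e1 : (∫⁻ t in Ioo (-r) r, ∫⁻ s in Ioo (-r) r, ENNReal.ofReal ((f t - f s)/(t - s)))
        = ∫⁻ t in Ioo (-r) r, ∫⁻ s in Ioo (-r) r, ∫⁻ u, (Ioc (min s t) (max s t)).indicator
            (fun _ => (ENNReal.ofReal |t - s|)⁻¹) u ∂f.measure := by
      apply lintegral_congr
      intro t
      apply lintegral_congr
      intro s
      exact step_inner t s
    have e2 : ∀ t : ℝ, (∫⁻ s in Ioo (-r) r, ∫⁻ u, (Ioc (min s t) (max s t)).indicator
            (fun _ => (ENNReal.ofReal |t - s|)⁻¹) u ∂f.measure)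
        = ∫⁻ u, (∫⁻ s in Ioo (-r) r, (Ioc (min s t) (max s t)).indicator
            (fun _ => (ENNReal.ofReal |t - s|)⁻¹) u) ∂f.measure := by
      intro t
      apply lintegral_lintegral_swap
      exact (hk3meas.comp ((measurable_const.prodMk measurable_id) :
        Measurable (fun q : ℝ × ℝ => (t, q)))).aemeasurable
    have e3 : (∫⁻ t in Ioo (-r) r, ∫⁻ u, (∫⁻ s in Ioo (-r) r,
          (Ioc (min s t) (max s t)).indicator
            (fun _ => (ENNReal.ofReal |t - s|)⁻¹) u) ∂f.measure)
        = ∫⁻ u, (∫⁻ t in Ioo (-r) r, ∫⁻ s in Ioo (-r) r,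
          (Ioc (min s t) (max s t)).indicator
            (fun _ => (ENNReal.ofReal |t - s|)⁻¹) u) ∂f.measure := by
      apply lintegral_lintegral_swap
      apply Measurable.aemeasurable
      apply Measurable.lintegral_prod_right'
        (f := fun q : (ℝ × ℝ) × ℝ => (Ioc (min q.2 q.1.1) (max q.2 q.1.1)).indicator
          (fun _ => (ENNReal.ofReal |q.1.1 - q.2|)⁻¹) q.1.2)
      exact hk3meas.comp ((measurable_fst.comp measurable_fst).prodMk
        (measurable_snd.prodMk (measurable_snd.comp measurable_fst)))
    rw [e1]
    rw [lintegral_congr e2, e3]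
    exact lintegral_congr (fun u => kernelG r hr u)
  -- finiteness
  have hIfin : (∫⁻ u, ENNReal.ofReal (psi r u) ∂f.measure) ≠ ⊤ := by
    have hb : (∫⁻ u, ENNReal.ofReal (psi r u) ∂f.measure)
        ≤ ∫⁻ _, ENNReal.ofReal ((2*Real.log 2 + 1)/(2*r)) ∂f.measure :=
      lintegral_mono fun u => ENNReal.ofReal_le_ofReal (psi_le r hr u)
    rw [lintegral_const] at hb
    exact ne_top_of_le_ne_top (ENNReal.mul_ne_top ENNReal.ofReal_ne_top
      (measure_ne_top _ _)) hb
  have hNNfin : (∫⁻ t in Ioo (-r) r, ∫⁻ s in Ioo (-r) r,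
      ENNReal.ofReal ((f t - f s)/(t - s))) ≠ ⊤ := by
    rw [NNeq]
    have : (∫⁻ u, ENNReal.ofReal (4*r^2 * psi r u) ∂f.measure)
        = ENNReal.ofReal (4*r^2) * ∫⁻ u, ENNReal.ofReal (psi r u) ∂f.measure := by
      rw [← lintegral_const_mul' _ _ ENNReal.ofReal_ne_top]
      apply lintegral_congr
      intro u
      rw [← ENNReal.ofReal_mul (by positivity)]
    rw [this]
    exact ENNReal.mul_ne_top ENNReal.ofReal_ne_top hIfin
  -- convert LHS double Bochner integral to double lintegral
  have hnonneg : ∀ t s : ℝ, 0 ≤ (f t - f s)/(t - s) := by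
    intro t s
    rcases le_total s t with hst | hst
    · exact div_nonneg (sub_nonneg.2 (f.mono hst)) (sub_nonneg.2 hst)
    · rw [← neg_div_neg_eq]
      exact div_nonneg (by linarith [sub_nonpos.2 (f.mono hst)])
        (by linarith [sub_nonpos.2 hst])
  have hinnermeas : Measurable (fun t => ∫⁻ s in Ioo (-r) r,
      ENNReal.ofReal ((f t - f s)/(t - s))) := by
    apply Measurable.lintegral_prod_right'
      (f := fun q : ℝ × ℝ => ENNReal.ofReal ((f q.1 - f q.2)/(q.1 - q.2)))
    exact (((hfmeas.comp measurable_fst).sub (hfmeas.comp measurable_snd)).div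
      (measurable_fst.sub measurable_snd)).ennreal_ofReal
  have hLHSf : (∫ t in Ioo (-r) r, ∫ s in Ioo (-r) r, (f t - f s)/(t - s))
      = (∫⁻ t in Ioo (-r) r, ∫⁻ s in Ioo (-r) r,
          ENNReal.ofReal ((f t - f s)/(t - s))).toReal := by
    have hin : ∀ t : ℝ, (∫ s in Ioo (-r) r, (f t - f s)/(t - s))
        = (∫⁻ s in Ioo (-r) r, ENNReal.ofReal ((f t - f s)/(t - s))).toReal := by
      intro t
      apply integral_eq_lintegral_of_nonneg_ae
      · exact Eventually.of_forall (fun s => hnonneg t s)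
      · exact (((measurable_const.sub hfmeas).div
          (measurable_const.sub measurable_id)).aestronglyMeasurable)
    simp_rw [hin]
    rw [integral_eq_lintegral_of_nonneg_ae
      (Eventually.of_forall (fun t => ENNReal.toReal_nonneg))
      (hinnermeas.ennreal_toReal.aestronglyMeasurable)]
    congr 1
    apply lintegral_congr_ae
    have hae : ∀ᵐ t ∂(volume.restrict (Ioo (-r) r)),
        (∫⁻ s in Ioo (-r) r, ENNReal.ofReal ((f t - f s)/(t - s))) < ⊤ :=
      ae_lt_top hinnermeas hNNfin
    filter_upwards [hae] with t ht
    rw [ENNReal.ofReal_toReal ht.ne]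
  -- LHS with g equals LHS with f
  have hLHSg : (∫ t in Ioo (-r) r, ∫ s in Ioo (-r) r, (g (x + t) - g (x + s)) / (t - s))
      = ∫ t in Ioo (-r) r, ∫ s in Ioo (-r) r, (f t - f s)/(t - s) := by
    apply integral_congr_ae
    have haet : ∀ᵐ t ∂(volume.restrict (Ioo (-r) r)), f t = h t := by
      apply ae_restrict_of_ae
      have : ∀ᵐ t ∂(volume : Measure ℝ), t ∉ {u | f u ≠ h u} :=
        (measure_eq_zero_iff_ae_notMem.1 hbadnull)
      filter_upwards [this] with t ht
      simpa [mem_setOf_eq, not_not] using ht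
    filter_upwards [haet] with t ht
    apply integral_congr_ae
    have haes : ∀ᵐ s ∂(volume.restrict (Ioo (-r) r)), f s = h s := by
      apply ae_restrict_of_ae
      have : ∀ᵐ s ∂(volume : Measure ℝ), s ∉ {u | f u ≠ h u} :=
        (measure_eq_zero_iff_ae_notMem.1 hbadnull)
      filter_upwards [this] with s hs
      simpa [mem_setOf_eq, not_not] using hs
    filter_upwards [haes] with s hs
    rw [ht, hs]
  -- RHS chain
  have hmulOut : (∫⁻ u, ENNReal.ofReal (4*r^2 * psi r u) ∂f.measure)
      = ENNReal.ofReal (4*r^2) * ∫⁻ u, ENNReal.ofReal (psi r u) ∂f.measure := by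
    rw [← lintegral_const_mul' _ _ ENNReal.ofReal_ne_top]
    apply lintegral_congr
    intro u
    rw [← ENNReal.ofReal_mul (by positivity)]
  have hcnt1 : {w : ℝ | f (r*w) ≠ h (r*w)}.Countable := by
    refine Countable.mono (fun w hw => hw)
      (hbad.preimage (f := fun w : ℝ => r*w) (fun a b hab => by
        simpa using mul_left_cancel₀ (ne_of_gt hr) hab))
  have hcnt2 : {w : ℝ | f (-(r*w)) ≠ h (-(r*w))}.Countable := by
    refine Countable.mono (fun w hw => hw)
      (hbad.preimage (f := fun w : ℝ => -(r*w)) (fun a b hab => by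
        have := neg_injective hab
        simpa using mul_left_cancel₀ (ne_of_gt hr) this))
  have haew : ∀ᵐ w ∂(volume.restrict (Ioo (0:ℝ) 1)),
      f (r*w) = h (r*w) ∧ f (-(r*w)) = h (-(r*w)) := by
    apply ae_restrict_of_ae
    have h1 : volume ({w : ℝ | f (r*w) ≠ h (r*w)} ∪ {w : ℝ | f (-(r*w)) ≠ h (-(r*w))}) = 0 :=
      (hcnt1.union hcnt2).measure_zero _
    have h2 := measure_eq_zero_iff_ae_notMem.1 h1
    filter_upwards [h2] with w hw
    simp only [mem_union, mem_setOf_eq] at hw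
    push_neg at hw
    exact hw
  have hRHS : (∫ w in (0:ℝ)..1, (w * Real.log ((1 + w) / (1 - w)))
        * ((g (x + r * w) - g (x - r * w)) / (2 * r * w)))
      = (∫⁻ u, ENNReal.ofReal (psi r u) ∂f.measure).toReal := by
    rw [intervalIntegral.integral_of_le (zero_le_one), integral_Ioc_eq_integral_Ioo]
    have hstep1 : (∫ w in Ioo (0:ℝ) 1, (w * Real.log ((1 + w) / (1 - w)))
          * ((g (x + r * w) - g (x - r * w)) / (2 * r * w)))
        = ∫ w in Ioo (0:ℝ) 1, (w * Real.log ((1 + w) / (1 - w)))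
          * ((f (r * w) - f (-(r * w))) / (2 * r * w)) := by
      apply integral_congr_ae
      filter_upwards [haew] with w hw
      rw [hw.1, hw.2, hh]
      simp only []
      rw [show x - r*w = x + -(r*w) from sub_eq_add_neg x (r*w)]
    rw [hstep1]
    have hMw : Measurable fun w : ℝ => w * Real.log ((1+w)/(1-w)) :=
      measurable_id.mul (Real.measurable_log.comp
        ((measurable_const.add measurable_id).div (measurable_const.sub measurable_id)))
    have hMf : Measurable fun w : ℝ => (f (r * w) - f (-(r * w))) / (2 * r * w) := by
      apply Measurable.div
      · exact (hfmeas.comp (measurable_id.const_mul r)).sub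
          (hfmeas.comp ((measurable_id.const_mul r).neg))
      · exact measurable_id.const_mul (2*r)
    have hstep2 : (∫ w in Ioo (0:ℝ) 1, (w * Real.log ((1 + w) / (1 - w)))
          * ((f (r * w) - f (-(r * w))) / (2 * r * w)))
        = (∫⁻ w in Ioo (0:ℝ) 1, ENNReal.ofReal ((w * Real.log ((1 + w) / (1 - w)))
          * ((f (r * w) - f (-(r * w))) / (2 * r * w)))).toReal := by
      apply integral_eq_lintegral_of_nonneg_ae
      · refine (ae_restrict_iff' measurableSet_Ioo).2 (Eventually.of_forall fun w hw => ?_)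
        have hw0 : 0 < w := hw.1
        have hw1 : w < 1 := hw.2
        apply mul_nonneg
        · apply mul_nonneg hw0.le
          apply Real.log_nonneg
          rw [le_div_iff₀ (by linarith)]
          linarith
        · apply div_nonneg
          · exact sub_nonneg.2 (f.mono (by nlinarith))
          · positivity
      · exact (hMw.mul hMf).aestronglyMeasurable
    rw [hstep2]
    congr 1
    have hstep3 : ∀ w ∈ Ioo (0:ℝ) 1, ENNReal.ofReal ((w * Real.log ((1 + w) / (1 - w)))
          * ((f (r * w) - f (-(r * w))) / (2 * r * w)))
        = ∫⁻ u, (Ioc (-(r*w)) (r*w)).indicator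
            (fun _ => ENNReal.ofReal ((w * Real.log ((1+w)/(1-w))) / (2*r*w))) u ∂f.measure := by
      intro w hw
      have hw0 : 0 < w := hw.1
      have hw1 : w < 1 := hw.2
      have hL : 0 ≤ Real.log ((1+w)/(1-w)) := by
        apply Real.log_nonneg
        rw [le_div_iff₀ (by linarith)]
        linarith
      rw [lintegral_indicator measurableSet_Ioc, setLIntegral_const, f.measure_Ioc,
        ← ENNReal.ofReal_mul (by positivity)]
      congr 1
      first
      | (field_simp; ring)
      | field_simp
    rw [setLIntegral_congr_fun measurableSet_Ioo hstep3]
    have hk4meas : Measurable (fun q : ℝ × ℝ => (Ioc (-(r*q.1)) (r*q.1)).indicator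
        (fun _ => ENNReal.ofReal ((q.1 * Real.log ((1+q.1)/(1-q.1))) / (2*r*q.1))) q.2) := by
      have heq : (fun q : ℝ × ℝ => (Ioc (-(r*q.1)) (r*q.1)).indicator
          (fun _ => ENNReal.ofReal ((q.1 * Real.log ((1+q.1)/(1-q.1))) / (2*r*q.1))) q.2)
          = fun q : ℝ × ℝ => ({p : ℝ × ℝ | -(r*p.1) < p.2 ∧ p.2 ≤ r*p.1}).indicator
            (fun p => ENNReal.ofReal ((p.1 * Real.log ((1+p.1)/(1-p.1))) / (2*r*p.1))) q := by
        funext q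
        by_cases hq : -(r*q.1) < q.2 ∧ q.2 ≤ r*q.1
        · rw [indicator_of_mem (show q.2 ∈ Ioc (-(r*q.1)) (r*q.1) from hq),
            indicator_of_mem (show q ∈ {p : ℝ × ℝ | -(r*p.1) < p.2 ∧ p.2 ≤ r*p.1} from hq)]
        · rw [indicator_of_notMem (show q.2 ∉ Ioc (-(r*q.1)) (r*q.1) from hq),
            indicator_of_notMem
              (show q ∉ {p : ℝ × ℝ | -(r*p.1) < p.2 ∧ p.2 ≤ r*p.1} from hq)]
      rw [heq]
      apply Measurable.indicator
      · apply Measurable.ennreal_ofReal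
        apply Measurable.div
        · exact (measurable_fst).mul (Real.measurable_log.comp
            (((measurable_const.add measurable_fst)).div
              ((measurable_const.sub measurable_fst))))
        · exact measurable_fst.const_mul (2*r)
      · exact (measurableSet_lt ((measurable_fst.const_mul r).neg) measurable_snd).inter
          (measurableSet_le measurable_snd (measurable_fst.const_mul r))
    have hswap : (∫⁻ w in Ioo (0:ℝ) 1, ∫⁻ u, (Ioc (-(r*w)) (r*w)).indicator
          (fun _ => ENNReal.ofReal ((w * Real.log ((1+w)/(1-w))) / (2*r*w))) u ∂f.measure)
        = ∫⁻ u, (∫⁻ w in Ioo (0:ℝ) 1, (Ioc (-(r*w)) (r*w)).indicator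
          (fun _ => ENNReal.ofReal ((w * Real.log ((1+w)/(1-w))) / (2*r*w))) u) ∂f.measure := by
      apply lintegral_lintegral_swap
      exact hk4meas.aemeasurable
    rw [hswap]
    exact lintegral_congr (fun u => kernelH r hr u)
  -- final assembly
  rw [hLHSg, hLHSf, NNeq, hRHS, hmulOut, ENNReal.toReal_mul,
    ENNReal.toReal_ofReal (by positivity)]
  have h4r : ((2*r)^2 : ℝ) = 4*r^2 := by ring
  rw [h4r]
  have h4ne : (4*r^2 : ℝ) ≠ 0 := by positivity
  field_simp
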